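/- In ℂ[z₂, z₃, w₁, w₂, w₃], let V₁, V₂, V₃ be the ℂ-linear derivations determined on the generators by: V₁(z₂) = −z₂w₃, V₁(z₃) = z₂w₂, V₁(w₁) = w₁w₃ − w₂², V₁(w₂) = 0, V₁(w₃) = 0; V₂(z₂) = 0, V₂(z₃) = 0, V₂(w₁) = z₃², V₂(w₂) = −z₂z₃, V₂(w₃) = z₂²; V₃(z₂) = z₃², V₃(z₃) = 0, V₃(w₁) = 0, V₃(w₂) = −w₁z₃, V₃(w₃) = w₁z₂ − w₂z₃. Then the ℂ-linear span of the set of products { f·g·h : f, g, h ∈ ℂ[z₂,z₃,w₁,w₂,w₃], V₂(f) = 0, V₃(g) = 0, V₁(h) = 0 } is all of ℂ[z₂, z₃, w₁, w₂, w₃]. -/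

import Mathlib

open MvPolynomial

/- Variables: `z₂ = X 0`, `z₃ = X 1`, `w₁ = X 2`, `w₂ = X 3`, `w₃ = X 4`. -/

/-- `V₁ = −z₂w₃ ∂z₂ + z₂w₂ ∂z₃ + (w₁w₃ − w₂²) ∂w₁`. -/
noncomputable def V1 : Derivation ℂ (MvPolynomial (Fin 5) ℂ) (MvPolynomial (Fin 5) ℂ) :=
  mkDerivation ℂ ![-(X 0 * X 4), X 0 * X 3, X 2 * X 4 - X 3 ^ 2, 0, 0]

/-- `V₂ = z₃² ∂w₁ − z₂z₃ ∂w₂ + z₂² ∂w₃`. -/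
noncomputable def V2 : Derivation ℂ (MvPolynomial (Fin 5) ℂ) (MvPolynomial (Fin 5) ℂ) :=
  mkDerivation ℂ ![0, 0, X 1 ^ 2, -(X 0 * X 1), X 0 ^ 2]

/-- `V₃ = z₃² ∂z₂ − w₁z₃ ∂w₂ + (w₁z₂ − w₂z₃) ∂w₃`. -/
noncomputable def V3 : Derivation ℂ (MvPolynomial (Fin 5) ℂ) (MvPolynomial (Fin 5) ℂ) :=
  mkDerivation ℂ ![X 1 ^ 2, 0, 0, -(X 2 * X 1), X 2 * X 0 - X 3 * X 1]

lemma ker_mul (D : Derivation ℂ (MvPolynomial (Fin 5) ℂ) (MvPolynomial (Fin 5) ℂ))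
    {a b : MvPolynomial (Fin 5) ℂ} (ha : D a = 0) (hb : D b = 0) : D (a * b) = 0 := by
  simp [D.leibniz, ha, hb]

lemma ker_pow (D : Derivation ℂ (MvPolynomial (Fin 5) ℂ) (MvPolynomial (Fin 5) ℂ))
    {a : MvPolynomial (Fin 5) ℂ} (ha : D a = 0) (n : ℕ) : D (a ^ n) = 0 := by
  induction n with
  | zero => simp
  | succ k ih => rw [pow_succ]; exact ker_mul D ih ha

/-- The span of products of kernel elements of `V₂, V₃, V₁` is everything:
`span(ker V₂ ⋅ ker V₃ ⋅ ker V₁) = ℂ[z₂,z₃,w₁,w₂,w₃]`. -/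
theorem gv_fiber_span_of_kernels :
    Submodule.span ℂ
      {q : MvPolynomial (Fin 5) ℂ |
        ∃ f g h : MvPolynomial (Fin 5) ℂ,
          V2 f = 0 ∧ V3 g = 0 ∧ V1 h = 0 ∧ q = f * g * h} = ⊤ := by
  rw [eq_top_iff]
  rintro p -
  induction p using MvPolynomial.induction_on' with
  | add p q hp hq => exact Submodule.add_mem _ hp hq
  | monomial m c =>
    have key : (monomial m c : MvPolynomial (Fin 5) ℂ) =
        c • ((X 0 ^ m 0 * X 1 ^ m 1) * (X 2 ^ m 2) * (X 3 ^ m 3 * X 4 ^ m 4)) := by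
      rw [monomial_eq, Finsupp.prod_fintype _ _ (fun i => pow_zero _),
        Fin.prod_univ_five, smul_eq_C_mul]
      ring
    rw [key]
    refine Submodule.smul_mem _ _ (Submodule.subset_span ⟨_, _, _, ?_, ?_, ?_, rfl⟩)
    · exact ker_mul _ (ker_pow _ (by simp [V2, mkDerivation_X]) _) (ker_pow _ (by simp [V2, mkDerivation_X]) _)
    · exact ker_pow _ (by simp [V3, mkDerivation_X]) _
    · exact ker_mul _ (ker_pow _ (by simp [V1, mkDerivation_X]) _) (ker_pow _ (by simp [V1, mkDerivation_X]) _)
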